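/- For all natural numbers x ≠ y and every real s, the incomplete Gaussian inner product of Hermite polynomials satisfies the Christoffel–Darboux-type identity: (x − y) · ∫_s^∞ e^{−t²/2}·He_x(t)·He_y(t) dt = e^{−s²/2} · ( He_x(s)·He_{y+1}(s) − He_{x+1}(s)·He_y(s) ). Consequently, for x ≠ y the discrete Hermite kernel equals K_s(x,y) = (2π·x!·y!)^{−1/2}·e^{−s²/2}·( He_x(s)·He_{y+1}(s) − He_{x+1}(s)·He_y(s) )/(x − y). -/

import Mathlib

open scoped Nat

noncomputable section

/-- The discrete Hermite kernel with parameter `s ∈ ℝ`: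
`K_s(x,y) = (2π·x!·y!)^{−1/2} ∫_s^∞ e^{−t²/2}·He_x(t)·He_y(t) dt` for `x, y ∈ ℕ`,
where `He_n` is the probabilists' Hermite polynomial. -/
def discreteHermiteKernel (s : ℝ) (x y : ℕ) : ℝ :=
  (Real.sqrt (2 * Real.pi * (x ! : ℝ) * (y ! : ℝ)))⁻¹ *
    ∫ t in Set.Ioi s, Real.exp (-t ^ 2 / 2) * Polynomial.aeval t (Polynomial.hermite x) *
      Polynomial.aeval t (Polynomial.hermite y)

namespace HermiteAux

open Polynomial MeasureTheory Filter Real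

lemma integrable_pow_gauss (n : ℕ) :
    Integrable fun t : ℝ => t ^ n * Real.exp (-t ^ 2 / 2) := by
  have h := integrable_rpow_mul_exp_neg_mul_sq (b := 1/2) (by norm_num)
    (s := (n : ℝ)) (lt_of_lt_of_le (by norm_num) (Nat.cast_nonneg n))
  have : (fun t : ℝ => t ^ (n : ℝ) * Real.exp (-(1/2) * t ^ 2))
      = fun t : ℝ => t ^ n * Real.exp (-t ^ 2 / 2) := by
    funext t
    rw [Real.rpow_natCast]
    ring_nf
  rwa [this] at h

lemma integrable_poly_gauss (Q : ℝ[X]) :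
    Integrable fun t : ℝ => Real.exp (-t ^ 2 / 2) * Q.eval t := by
  induction Q using Polynomial.induction_on' with
  | add p q hp hq =>
    have := hp.add hq
    refine this.congr (Filter.Eventually.of_forall fun t => ?_)
    simp [mul_add]
  | monomial n a =>
    have h := (integrable_pow_gauss n).const_mul a
    refine h.congr (Filter.Eventually.of_forall fun t => ?_)
    simp [Polynomial.eval_monomial]
    ring

lemma tendsto_pow_gauss (n : ℕ) :
    Tendsto (fun t : ℝ => t ^ n * Real.exp (-t ^ 2 / 2)) atTop (nhds 0) := by
  have h2 : Tendsto (fun t : ℝ => t ^ 2 / 2) atTop atTop :=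
    (tendsto_pow_atTop two_ne_zero).atTop_div_const (by norm_num)
  have h3 := (Real.tendsto_pow_mul_exp_neg_atTop_nhds_zero n).comp h2
  have h4 : Tendsto (fun t : ℝ => (2:ℝ) ^ n * ((t ^ 2 / 2) ^ n * Real.exp (-(t ^ 2 / 2))))
      atTop (nhds 0) := by
    have := h3.const_mul ((2:ℝ) ^ n)
    simpa using this
  refine squeeze_zero_norm' ?_ h4
  filter_upwards [eventually_ge_atTop (1:ℝ)] with t ht
  have h1t : (0:ℝ) ≤ t := le_trans zero_le_one ht
  have hpow : t ^ n ≤ (t ^ 2) ^ n := by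
    apply pow_le_pow_left₀ h1t
    nlinarith
  have hexp : Real.exp (-t ^ 2 / 2) = Real.exp (-(t ^ 2 / 2)) := by ring_nf
  rw [Real.norm_eq_abs, abs_mul, abs_of_nonneg (pow_nonneg h1t n),
    abs_of_nonneg (Real.exp_pos _).le, hexp]
  have : (2:ℝ) ^ n * ((t ^ 2 / 2) ^ n * Real.exp (-(t ^ 2 / 2)))
      = (t ^ 2) ^ n * Real.exp (-(t ^ 2 / 2)) := by
    rw [← mul_assoc, ← mul_pow]
    ring_nf
  rw [this]
  exact mul_le_mul_of_nonneg_right hpow (Real.exp_pos _).le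

lemma tendsto_poly_gauss (Q : ℝ[X]) :
    Tendsto (fun t : ℝ => Real.exp (-t ^ 2 / 2) * Q.eval t) atTop (nhds 0) := by
  induction Q using Polynomial.induction_on' with
  | add p q hp hq =>
    have := hp.add hq
    rw [add_zero] at this
    refine this.congr' (Filter.Eventually.of_forall fun t => ?_)
    simp [mul_add]
  | monomial n a =>
    have h := (tendsto_pow_gauss n).const_mul a
    rw [mul_zero] at h
    refine h.congr' (Filter.Eventually.of_forall fun t => ?_)
    simp [Polynomial.eval_monomial]
    ring

lemma aeval_mul_eq (p q : ℤ[X]) (t : ℝ) :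
    (Polynomial.aeval t p : ℝ) * Polynomial.aeval t q
      = ((p * q).map (Int.castRingHom ℝ)).eval t := by
  rw [← map_mul]
  simp [Polynomial.aeval_def, Polynomial.eval₂_eq_eval_map]

lemma derivative_hermite (n : ℕ) :
    Polynomial.derivative (Polynomial.hermite (n + 1))
      = Polynomial.C ((n : ℤ) + 1) * Polynomial.hermite n := by
  induction n with
  | zero => simp [Polynomial.hermite_one, Polynomial.hermite_zero]
  | succ n ih =>
    rw [Polynomial.hermite_succ (n + 1), Polynomial.derivative_sub,
      Polynomial.derivative_mul, Polynomial.derivative_X, ih,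
      Polynomial.derivative_mul, Polynomial.derivative_C,
      Polynomial.hermite_succ n]
    push_cast
    simp only [map_add, map_one]
    ring

lemma hasDerivAt_aeval_hermite (n : ℕ) (t : ℝ) :
    HasDerivAt (fun u : ℝ => (Polynomial.aeval u (Polynomial.hermite n) : ℝ))
      (t * Polynomial.aeval t (Polynomial.hermite n)
        - Polynomial.aeval t (Polynomial.hermite (n + 1))) t := by
  have h := (Polynomial.hermite n).hasDerivAt_aeval (𝕜 := ℝ) t
  have : (Polynomial.aeval t (Polynomial.derivative (Polynomial.hermite n)) : ℝ)
      = t * Polynomial.aeval t (Polynomial.hermite n)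
        - Polynomial.aeval t (Polynomial.hermite (n + 1)) := by
    have hs := Polynomial.hermite_succ n
    have := congrArg (fun p => (Polynomial.aeval t p : ℝ)) hs
    simp only [map_sub, map_mul, Polynomial.aeval_X] at this
    linarith
  rwa [this] at h

lemma hasDerivAt_aeval_hermite_succ (n : ℕ) (t : ℝ) :
    HasDerivAt (fun u : ℝ => (Polynomial.aeval u (Polynomial.hermite (n + 1)) : ℝ))
      (((n : ℝ) + 1) * Polynomial.aeval t (Polynomial.hermite n)) t := by
  have h := (Polynomial.hermite (n + 1)).hasDerivAt_aeval (𝕜 := ℝ) t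
  have : (Polynomial.aeval t (Polynomial.derivative (Polynomial.hermite (n + 1))) : ℝ)
      = ((n : ℝ) + 1) * Polynomial.aeval t (Polynomial.hermite n) := by
    rw [derivative_hermite]
    simp
  rwa [this] at h

lemma hasDerivAt_gauss (t : ℝ) :
    HasDerivAt (fun u : ℝ => Real.exp (-u ^ 2 / 2)) (-t * Real.exp (-t ^ 2 / 2)) t := by
  have h : HasDerivAt (fun u : ℝ => -u ^ 2 / 2) (-t) t := by
    have := ((hasDerivAt_pow 2 t).neg).div_const 2
    refine this.congr_deriv ?_
    push_cast
    ring
  have := h.exp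
  convert this using 1
  ring

lemma hasDerivAt_F (x y : ℕ) (t : ℝ) :
    HasDerivAt (fun u : ℝ => Real.exp (-u ^ 2 / 2) *
        (Polynomial.aeval u (Polynomial.hermite x) *
            Polynomial.aeval u (Polynomial.hermite (y + 1))
          - Polynomial.aeval u (Polynomial.hermite (x + 1)) *
              Polynomial.aeval u (Polynomial.hermite y)))
      (((y : ℝ) - (x : ℝ)) * (Real.exp (-t ^ 2 / 2) *
        Polynomial.aeval t (Polynomial.hermite x) *
        Polynomial.aeval t (Polynomial.hermite y))) t := by
  have hE := hasDerivAt_gauss t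
  have hA := hasDerivAt_aeval_hermite x t
  have hB := hasDerivAt_aeval_hermite y t
  have hA1 := hasDerivAt_aeval_hermite_succ x t
  have hB1 := hasDerivAt_aeval_hermite_succ y t
  have h := hE.mul (((hA.mul hB1).sub (hA1.mul hB)))
  refine h.congr_deriv ?_
  simp only [Pi.mul_apply, Pi.sub_apply]
  ring

end HermiteAux

/-- For `x ≠ y` and any real `s`, the Christoffel–Darboux-type identity
`(x − y)·∫_s^∞ e^{−t²/2}·He_x(t)·He_y(t) dt
  = e^{−s²/2}·( He_x(s)·He_{y+1}(s) − He_{x+1}(s)·He_y(s) )` holds, and consequently the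
discrete Hermite kernel equals
`K_s(x,y) = (2π·x!·y!)^{−1/2}·e^{−s²/2}·( He_x(s)·He_{y+1}(s) − He_{x+1}(s)·He_y(s) )/(x−y)`. -/
theorem discreteHermiteKernel_christoffelDarboux_upper
    (x y : ℕ) (hxy : x ≠ y) (s : ℝ) :
    ((x : ℝ) - (y : ℝ)) *
        ∫ t in Set.Ioi s, Real.exp (-t ^ 2 / 2) * Polynomial.aeval t (Polynomial.hermite x) *
            Polynomial.aeval t (Polynomial.hermite y)
      = Real.exp (-s ^ 2 / 2) *
          (Polynomial.aeval s (Polynomial.hermite x) *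
              Polynomial.aeval s (Polynomial.hermite (y + 1))
            - Polynomial.aeval s (Polynomial.hermite (x + 1)) *
                Polynomial.aeval s (Polynomial.hermite y))
    ∧ discreteHermiteKernel s x y
      = (Real.sqrt (2 * Real.pi * (x ! : ℝ) * (y ! : ℝ)))⁻¹ * Real.exp (-s ^ 2 / 2) *
          (Polynomial.aeval s (Polynomial.hermite x) *
              Polynomial.aeval s (Polynomial.hermite (y + 1))
            - Polynomial.aeval s (Polynomial.hermite (x + 1)) *
                Polynomial.aeval s (Polynomial.hermite y))
          / ((x : ℝ) - (y : ℝ)) := by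
  classical
  set F : ℝ → ℝ := fun u => Real.exp (-u ^ 2 / 2) *
      (Polynomial.aeval u (Polynomial.hermite x) *
          Polynomial.aeval u (Polynomial.hermite (y + 1))
        - Polynomial.aeval u (Polynomial.hermite (x + 1)) *
            Polynomial.aeval u (Polynomial.hermite y)) with hF
  set G : ℝ → ℝ := fun t => ((y : ℝ) - (x : ℝ)) * (Real.exp (-t ^ 2 / 2) *
      Polynomial.aeval t (Polynomial.hermite x) *
      Polynomial.aeval t (Polynomial.hermite y)) with hG
  have hderiv : ∀ t ∈ Set.Ioi s, HasDerivAt F (G t) t := fun t _ =>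
    HermiteAux.hasDerivAt_F x y t
  have hcont : ContinuousWithinAt F (Set.Ici s) s :=
    (HermiteAux.hasDerivAt_F x y s).continuousAt.continuousWithinAt
  have hint : MeasureTheory.IntegrableOn G (Set.Ioi s) := by
    have h := (HermiteAux.integrable_poly_gauss
      ((Polynomial.hermite x * Polynomial.hermite y).map (Int.castRingHom ℝ))).const_mul
      ((y : ℝ) - (x : ℝ))
    refine (h.congr (Filter.Eventually.of_forall fun t => ?_)).integrableOn
    simp only [hG, ← HermiteAux.aeval_mul_eq]
    ring
  have htend : Filter.Tendsto F Filter.atTop (nhds 0) := by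
    have h := HermiteAux.tendsto_poly_gauss
      ((Polynomial.hermite x * Polynomial.hermite (y + 1)
        - Polynomial.hermite (x + 1) * Polynomial.hermite y).map (Int.castRingHom ℝ))
    have heq : ∀ t : ℝ, Real.exp (-t ^ 2 / 2) *
        ((Polynomial.hermite x * Polynomial.hermite (y + 1)
          - Polynomial.hermite (x + 1) * Polynomial.hermite y).map
            (Int.castRingHom ℝ)).eval t = F t := by
      intro t
      simp only [hF, Polynomial.map_sub, Polynomial.eval_sub, ← HermiteAux.aeval_mul_eq]
    exact h.congr heq
  have key := MeasureTheory.integral_Ioi_of_hasDerivAt_of_tendsto hcont hderiv hint htend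
  -- key : ∫ t in Ioi s, G t = 0 - F s
  have hGint : ∫ t in Set.Ioi s, G t
      = ((y : ℝ) - (x : ℝ)) * ∫ t in Set.Ioi s,
          Real.exp (-t ^ 2 / 2) * Polynomial.aeval t (Polynomial.hermite x) *
            Polynomial.aeval t (Polynomial.hermite y) := by
    rw [← MeasureTheory.integral_const_mul]
  have first : ((x : ℝ) - (y : ℝ)) *
      ∫ t in Set.Ioi s, Real.exp (-t ^ 2 / 2) * Polynomial.aeval t (Polynomial.hermite x) *
          Polynomial.aeval t (Polynomial.hermite y)
      = Real.exp (-s ^ 2 / 2) *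
          (Polynomial.aeval s (Polynomial.hermite x) *
              Polynomial.aeval s (Polynomial.hermite (y + 1))
            - Polynomial.aeval s (Polynomial.hermite (x + 1)) *
                Polynomial.aeval s (Polynomial.hermite y)) := by
    rw [hGint] at key
    have : F s = Real.exp (-s ^ 2 / 2) *
        (Polynomial.aeval s (Polynomial.hermite x) *
            Polynomial.aeval s (Polynomial.hermite (y + 1))
          - Polynomial.aeval s (Polynomial.hermite (x + 1)) *
              Polynomial.aeval s (Polynomial.hermite y)) := rfl
    rw [← this]
    linear_combination -key
  refine ⟨first, ?_⟩
  have hne : ((x : ℝ) - (y : ℝ)) ≠ 0 := by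
    rw [sub_ne_zero]
    exact_mod_cast hxy
  rw [discreteHermiteKernel]
  rw [show (∫ t in Set.Ioi s, Real.exp (-t ^ 2 / 2) *
        Polynomial.aeval t (Polynomial.hermite x) *
        Polynomial.aeval t (Polynomial.hermite y))
      = Real.exp (-s ^ 2 / 2) *
          (Polynomial.aeval s (Polynomial.hermite x) *
              Polynomial.aeval s (Polynomial.hermite (y + 1))
            - Polynomial.aeval s (Polynomial.hermite (x + 1)) *
                Polynomial.aeval s (Polynomial.hermite y)) / ((x : ℝ) - (y : ℝ)) by
    rw [eq_div_iff hne]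
    linear_combination first]
  ring

end
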